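/- Let f : X → X be a homeomorphism of a compact connected metric space and C a terminal chain component of f with C ≠ X, and suppose f has shadowing on B_b(C) for some b > 0. Then for every a > 0 there exists a terminal chain component D of f with empty interior and D ⊆ B_a(C). -/
import Mathlib


open Metric Filter Topology Set

variable {X : Type*}

/-- `(c i)_{i=0}^k` is a `δ`-chain of `f` (up to index `k`). -/
def IsDeltaChain [MetricSpace X] (f : X → X) (δ : ℝ) (k : ℕ) (c : ℕ → X) : Prop :=
  ∀ i < k, dist (f (c i)) (c (i + 1)) ≤ δ

/-- `x → y` : for every `δ > 0` there is a `δ`-chain from `x` to `y`. -/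
def ChainReach [MetricSpace X] (f : X → X) (x y : X) : Prop :=
  ∀ δ > 0, ∃ k ≥ 1, ∃ c : ℕ → X, c 0 = x ∧ c k = y ∧ IsDeltaChain f δ k c

/-- The chain recurrent set. -/
def ChainRec [MetricSpace X] (f : X → X) : Set X := {x | ChainReach f x x}

/-- `C` is a chain component of `f`. -/
def IsChainComponent [MetricSpace X] (f : X → X) (C : Set X) : Prop :=
  ∃ x, ChainReach f x x ∧
    C = {y | ChainReach f y y ∧ ChainReach f x y ∧ ChainReach f y x}

/-- A set is chain stable iff points chain-reachable from it stay in it. -/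
def ChainStable [MetricSpace X] (f : X → X) (S : Set X) : Prop :=
  ∀ x ∈ S, ∀ y, ChainReach f x y → y ∈ S

/-- `S` is "initially stable": if `y → x` with `x ∈ S` then `y ∈ S`. -/
def InitialStable [MetricSpace X] (f : X → X) (S : Set X) : Prop :=
  ∀ x ∈ S, ∀ y, ChainReach f y x → y ∈ S

/-- `f` restricted to `Λ` is chain transitive. -/
def ChainTransitiveOn [MetricSpace X] (f : X → X) (Λ : Set X) : Prop :=
  ∀ p ∈ Λ, ∀ q ∈ Λ, ∀ δ > 0, ∃ k ≥ 1, ∃ c : ℕ → X,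
    c 0 = p ∧ c k = q ∧ (∀ i ≤ k, c i ∈ Λ) ∧ IsDeltaChain f δ k c

/-- `f` has shadowing on `S`. -/
def ShadowsOn [MetricSpace X] (f : X → X) (S : Set X) : Prop :=
  ∀ ε > 0, ∃ δ > 0, ∀ (k : ℕ) (c : ℕ → X), (∀ i ≤ k, c i ∈ S) →
    IsDeltaChain f δ k c → ∃ x, ∀ i ≤ k, dist (c i) (f^[i] x) ≤ ε

/-- Iterate of a homeomorphism indexed by `ℤ`. -/
def hIter [TopologicalSpace X] (f : X ≃ₜ X) (i : ℤ) : X → X :=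
  if 0 ≤ i then (⇑f)^[i.toNat] else (⇑f.symm)^[(-i).toNat]

/-- A `δ`-limit-pseudo orbit of the homeomorphism `f`. -/
def IsLimitPseudoOrbit [MetricSpace X] (f : X ≃ₜ X) (δ : ℝ) (ξ : ℤ → X) : Prop :=
  (∀ i : ℤ, dist (f (ξ i)) (ξ (i + 1)) ≤ δ) ∧
  Tendsto (fun i : ℤ => dist (f (ξ i)) (ξ (i + 1))) atBot (nhds 0) ∧
  Tendsto (fun i : ℤ => dist (f (ξ i)) (ξ (i + 1))) atTop (nhds 0)

/-- `f` has L-shadowing on `S`. -/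
def LShadowsOn [MetricSpace X] (f : X ≃ₜ X) (S : Set X) : Prop :=
  ∀ ε > 0, ∃ δ > 0, ∀ ξ : ℤ → X, (∀ i : ℤ, ξ i ∈ S) →
    IsLimitPseudoOrbit f δ ξ →
    ∃ x : X, (∀ i : ℤ, dist (ξ i) (hIter f i x) ≤ ε) ∧
      Tendsto (fun i : ℤ => dist (ξ i) (hIter f i x)) atBot (nhds 0) ∧
      Tendsto (fun i : ℤ => dist (ξ i) (hIter f i x)) atTop (nhds 0)

/-- `f` is expansive on `S`. -/
def ExpansiveOn [MetricSpace X] (f : X ≃ₜ X) (S : Set X) : Prop :=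
  ∃ e > 0, ∀ x y : X, (∀ i : ℤ, hIter f i x ∈ S) → (∀ i : ℤ, hIter f i y ∈ S) →
    (∀ i : ℤ, dist (hIter f i x) (hIter f i y) ≤ e) → x = y

/-- Closed `b`-neighborhood of `S`. -/
def Nbhd [MetricSpace X] (b : ℝ) (S : Set X) : Set X := {x | Metric.infDist x S ≤ b}

/-- Attractor for a continuous map `f`. -/
def IsAttractor [TopologicalSpace X] (f : X → X) (Λ : Set X) : Prop :=
  IsClosed Λ ∧ f '' Λ = Λ ∧
    ∃ U : Set X, IsOpen U ∧ f '' closure U ⊆ U ∧ Λ = ⋂ i : ℕ, f^[i] '' U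

/-- `f` is (topologically) mixing. -/
def IsMixing [TopologicalSpace X] (f : X → X) : Prop :=
  ∀ U V : Set X, IsOpen U → IsOpen V → U.Nonempty → V.Nonempty →
    ∃ j : ℕ, ∀ i ≥ j, (f^[i] '' U ∩ V).Nonempty

/-- The ω-limit set of `x` under `f`. -/
def OmegaSet [TopologicalSpace X] (f : X → X) (x : X) : Set X :=
  {y | ∃ φ : ℕ → ℕ, StrictMono φ ∧ Tendsto (fun j => f^[φ j] x) atTop (nhds y)}

/-- `M` is a minimal set for `f`. -/
def IsMinimalSet [TopologicalSpace X] (f : X → X) (M : Set X) : Prop :=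
  M.Nonempty ∧ IsClosed M ∧ f '' M ⊆ M ∧ ∀ x ∈ M, OmegaSet f x = M

section ChainAux

variable [MetricSpace X] {F : X → X} {δ δ' η : ℝ} {k : ℕ} {c : ℕ → X} {x y z w : X}

lemma IsDeltaChain.mono (h : δ ≤ δ') (hc : IsDeltaChain F δ k c) : IsDeltaChain F δ' k c :=
  fun i hi => (hc i hi).trans h

lemma chain_concat {k1 k2 : ℕ} {c d : ℕ → X} (hk1 : 1 ≤ k1)
    (hc : IsDeltaChain F δ k1 c) (hd : IsDeltaChain F δ k2 d) (hjoin : c k1 = d 0) :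
    ∃ e : ℕ → X, e 0 = c 0 ∧ e (k1 + k2) = d k2 ∧ IsDeltaChain F δ (k1 + k2) e := by
  have hk0 : 0 < k1 := by omega
  refine ⟨fun i => if i < k1 then c i else d (i - k1), by simp [hk0], ?_, ?_⟩
  · have h1 : ¬ (k1 + k2 < k1) := by omega
    simp [h1]
  · intro i hi
    by_cases h1 : i < k1
    · by_cases h2 : i + 1 < k1
      · simpa [h1, h2] using hc i h1
      · have h3 : i + 1 = k1 := by omega
        have h4 : d (i + 1 - k1) = c (i + 1) := by
          rw [show i + 1 - k1 = 0 by omega, ← hjoin, h3]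
        simp only [if_pos h1, if_neg h2, h4]
        exact hc i h1
    · have h2 : ¬ (i + 1 < k1) := by omega
      simp only [if_neg h1, if_neg h2]
      rw [show i + 1 - k1 = (i - k1) + 1 by omega]
      exact hd _ (by omega)

lemma ChainReach.trans (h1 : ChainReach F x y) (h2 : ChainReach F y z) :
    ChainReach F x z := by
  intro δ hδ
  obtain ⟨k1, hk1, c, hc0, hck, hc⟩ := h1 δ hδ
  obtain ⟨k2, hk2, d, hd0, hdk, hd⟩ := h2 δ hδ
  obtain ⟨e, he0, hek, he⟩ := chain_concat hk1 hc hd (by rw [hck, hd0])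
  exact ⟨k1 + k2, by omega, e, by rw [he0, hc0], by rw [hek, hdk], he⟩

lemma chainReach_apply : ChainReach F x (F x) := by
  intro δ hδ
  refine ⟨1, le_refl 1, fun i => if i = 0 then x else F x, by simp, by simp, ?_⟩
  intro i hi
  have h0 : i = 0 := by omega
  subst h0
  simp [hδ.le]

lemma chain_replace_last (hk : 1 ≤ k) (hc : IsDeltaChain F δ k c) (h : dist (c k) y ≤ δ') :
    ∃ e : ℕ → X, e 0 = c 0 ∧ e k = y ∧ IsDeltaChain F (δ + δ') k e := by
  have hδ' : 0 ≤ δ' := le_trans dist_nonneg h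
  refine ⟨fun i => if i = k then y else c i, by simp [show (0:ℕ) ≠ k by omega], by simp, ?_⟩
  intro i hi
  have h1 : ¬ (i = k) := by omega
  by_cases h2 : i + 1 = k
  · simp only [if_neg h1, if_pos h2]
    calc dist (F (c i)) y ≤ dist (F (c i)) (c (i + 1)) + dist (c (i + 1)) y := dist_triangle _ _ _
      _ ≤ δ + δ' := add_le_add (hc i hi) (by rw [h2]; exact h)
  · simp only [if_neg h1, if_neg h2]
    exact (hc i hi).trans (by linarith)

lemma isClosed_chainReach_to (F : X → X) (x : X) : IsClosed {y | ChainReach F x y} := by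
  apply isClosed_of_closure_subset
  intro y hy δ hδ
  obtain ⟨y', hy', hdy⟩ := Metric.mem_closure_iff.mp hy (δ / 2) (by linarith)
  obtain ⟨k, hk, c, hc0, hck, hc⟩ := hy' (δ / 2) (by linarith)
  obtain ⟨e, he0, hek, he⟩ := chain_replace_last (y := y) (δ' := δ / 2) hk hc
    (by rw [hck, dist_comm]; exact hdy.le)
  exact ⟨k, hk, e, by rw [he0, hc0], hek, by simpa using he⟩

lemma isClosed_chainReach_from (hF : Continuous F) (x : X) :
    IsClosed {y | ChainReach F y x} := by
  apply isClosed_of_closure_subset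
  intro y hy δ hδ
  obtain ⟨r, hr, hcont⟩ := Metric.continuous_iff.mp hF y (δ / 2) (by linarith)
  obtain ⟨y', hy', hdy⟩ := Metric.mem_closure_iff.mp hy (min r (δ / 2)) (by positivity)
  obtain ⟨k, hk, c, hc0, hck, hc⟩ := hy' (δ / 2) (by linarith)
  refine ⟨k, hk, fun i => if i = 0 then y else c i,
    by simp, by simp [show ¬ (k = 0) by omega, hck], ?_⟩
  intro i hi
  by_cases h0 : i = 0
  · subst h0
    simp only [if_pos rfl, if_neg (by omega : ¬ (0 + 1 = 0))]
    have h1 : dist (F y') (F y) < δ / 2 := by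
      rw [dist_comm y y'] at hdy
      exact hcont y' (lt_of_lt_of_le hdy (min_le_left _ _))
    calc dist (F y) (c 1) ≤ dist (F y) (F y') + dist (F y') (c 1) := dist_triangle _ _ _
      _ ≤ δ / 2 + δ / 2 := by
          refine add_le_add (by rw [dist_comm]; exact h1.le) ?_
          have := hc 0 (by omega)
          rwa [hc0] at this
      _ = δ := by ring
  · simp only [if_neg h0, if_neg (by omega : ¬ (i + 1 = 0))]
    exact (hc i hi).trans (by linarith)

lemma isClosed_chainReach_self (hF : Continuous F) :
    IsClosed {y | ChainReach F y y} := by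
  apply isClosed_of_closure_subset
  intro y hy δ hδ
  obtain ⟨r, hr, hcont⟩ := Metric.continuous_iff.mp hF y (δ / 4) (by linarith)
  obtain ⟨y', hy', hdy⟩ := Metric.mem_closure_iff.mp hy (min r (δ / 4)) (by positivity)
  obtain ⟨k, hk, c, hc0, hck, hc⟩ := hy' (δ / 4) (by linarith)
  obtain ⟨e, he0, hek, he⟩ := chain_concat hk hc hc (by rw [hck, hc0])
  have hkk : 1 ≤ k + k := by omega
  obtain ⟨e2, he20, he2k, he2⟩ := chain_replace_last (y := y) (δ' := δ / 4) hkk he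
    (by rw [hek, hck, dist_comm]; exact le_trans hdy.le (min_le_right _ _))
  refine ⟨k + k, hkk, fun i => if i = 0 then y else e2 i,
    by simp, by simp [show ¬ (k + k = 0) by omega, he2k], ?_⟩
  intro i hi
  by_cases h0 : i = 0
  · subst h0
    simp only [if_pos rfl, if_neg (by omega : ¬ (0 + 1 = 0))]
    have h1 : dist (F y') (F y) < δ / 4 := by
      rw [dist_comm y y'] at hdy
      exact hcont y' (lt_of_lt_of_le hdy (min_le_left _ _))
    have h2 : dist (F y') (e2 1) ≤ δ / 4 + δ / 4 := by
      have := he2 0 (by omega)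
      rwa [he20, he0, hc0] at this
    calc dist (F y) (e2 (0+1)) ≤ dist (F y) (F y') + dist (F y') (e2 1) := dist_triangle _ _ _
      _ ≤ δ / 4 + (δ / 4 + δ / 4) := add_le_add (by rw [dist_comm]; exact h1.le) h2
      _ ≤ δ := by linarith
  · simp only [if_neg h0, if_neg (by omega : ¬ (i + 1 = 0))]
    exact (he2 i hi).trans (by linarith)

lemma chain_stay {T G : Set X} (hTG : ∀ w v, v ∈ T → dist w (F v) ≤ η → w ∈ G)
    (hGT : G ⊆ T) (hδ : δ ≤ η) (hc : IsDeltaChain F δ k c) (h0 : c 0 ∈ T) :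
    ∀ i, 1 ≤ i → i ≤ k → c i ∈ G := by
  intro i
  induction i with
  | zero => omega
  | succ n ih =>
    intro _ hik
    have hcnT : c n ∈ T := by
      rcases Nat.eq_zero_or_pos n with rfl | hn
      · exact h0
      · exact hGT (ih hn (by omega))
    exact hTG _ _ hcnT (by rw [dist_comm]; exact (hc n (by omega)).trans hδ)

end ChainAux

/-- The set of points reachable from `C` by a `δ`-chain of length at least one. -/
def ReachSet [MetricSpace X] (F : X → X) (C : Set X) (δ : ℝ) : Set X :=
  {y | ∃ p ∈ C, ∃ k ≥ 1, ∃ c : ℕ → X, c 0 = p ∧ c k = y ∧ IsDeltaChain F δ k c}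

section ReachSetAux

variable [MetricSpace X] {F : X → X} {C : Set X} {δ δ' : ℝ} {y w : X}

lemma reachSet_mono (h : δ ≤ δ') : ReachSet F C δ ⊆ ReachSet F C δ' := by
  rintro y ⟨p, hp, k, hk, c, hc0, hck, hc⟩
  exact ⟨p, hp, k, hk, c, hc0, hck, hc.mono h⟩

lemma reachSet_extend (hy : y ∈ ReachSet F C δ) (h : dist (F y) w ≤ δ) :
    w ∈ ReachSet F C δ := by
  obtain ⟨p, hp, k, hk, c, hc0, hck, hc⟩ := hy
  refine ⟨p, hp, k + 1, by omega, fun i => if i = k + 1 then w else c i,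
    by simp [show ¬ ((0:ℕ) = k + 1) by omega, hc0], by simp, ?_⟩
  intro i hi
  by_cases h1 : i = k
  · subst h1
    simp only [if_neg (by omega : ¬ (i = i + 1)), if_pos rfl]
    rw [hck]
    exact h
  · simp only [if_neg (by omega : ¬ (i = k + 1)), if_neg (by omega : ¬ (i + 1 = k + 1))]
    exact hc i (by omega)

lemma subset_reachSet (hrec : ∀ p ∈ C, ChainReach F p p) (hδ : 0 < δ) :
    C ⊆ ReachSet F C δ := by
  intro p hp
  obtain ⟨k, hk, c, hc0, hck, hc⟩ := hrec p hp δ hδ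
  exact ⟨p, hp, k, hk, c, hc0, hck, hc⟩

end ReachSetAux

/-- Every nonempty compact chain stable set contains a terminal chain component. -/
lemma exists_terminal_subset [MetricSpace X] [CompactSpace X] {F : X → X} {K : Set X}
    (hKne : K.Nonempty) (hKcl : IsClosed K) (hKst : ChainStable F K) :
    ∃ D, IsChainComponent F D ∧ ChainStable F D ∧ D ⊆ K := by
  set S : Set (Set X) := {s | s.Nonempty ∧ s ⊆ K ∧ IsClosed s ∧ ChainStable F s} with hSdef
  have hKS : K ∈ S := ⟨hKne, Subset.rfl, hKcl, hKst⟩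
  have hzorn : ∀ c ⊆ S, IsChain (· ⊆ ·) c → ∃ lb ∈ S, ∀ s ∈ c, lb ⊆ s := by
    intro c hcS hchain
    rcases c.eq_empty_or_nonempty with rfl | hcne
    · exact ⟨K, hKS, by simp⟩
    · have hne : Nonempty c := hcne.to_subtype
      refine ⟨⋂₀ c, ⟨?_, ?_, ?_, ?_⟩, fun s hs => sInter_subset_of_mem hs⟩
      · exact IsCompact.nonempty_sInter_of_directed_nonempty_isCompact_isClosed
          (fun s hs t ht => (hchain.total hs ht).elim
            (fun h => ⟨s, hs, Subset.rfl, h⟩) (fun h => ⟨t, ht, h, Subset.rfl⟩))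
          (fun s hs => (hcS hs).1)
          (fun s hs => (hcS hs).2.2.1.isCompact) (fun s hs => (hcS hs).2.2.1)
      · obtain ⟨s, hs⟩ := hcne
        exact (sInter_subset_of_mem hs).trans (hcS hs).2.1
      · exact isClosed_sInter fun s hs => (hcS hs).2.2.1
      · intro x hx y hy
        exact mem_sInter.mpr fun s hs => (hcS hs).2.2.2 x (mem_sInter.mp hx s hs) y hy
  obtain ⟨M, hMS, hMmin⟩ := zorn_superset S hzorn
  have key : ∀ x ∈ M, {y | ChainReach F x y} = M := by
    intro x hx
    have hsub : {y | ChainReach F x y} ⊆ M := fun y hy => hMS.2.2.2 x hx y hy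
    have hmem : {y | ChainReach F x y} ∈ S :=
      ⟨⟨F x, chainReach_apply⟩, hsub.trans hMS.2.1, isClosed_chainReach_to F x,
        fun p hp q hq => hp.trans hq⟩
    exact Subset.antisymm hsub (hMmin hmem hsub)
  obtain ⟨x₀, hx₀⟩ := hMS.1
  have hxmem : ∀ p ∈ M, ∀ q ∈ M, ChainReach F p q := by
    intro p hp q hq
    rw [← key p hp] at hq
    exact hq
  have hx₀x₀ : ChainReach F x₀ x₀ := hxmem x₀ hx₀ x₀ hx₀
  have hDM : {y | ChainReach F y y ∧ ChainReach F x₀ y ∧ ChainReach F y x₀} = M := by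
    apply Subset.antisymm
    · intro y hy
      rw [← key x₀ hx₀]
      exact hy.2.1
    · intro p hp
      have hpM : p ∈ M := hp
      have hfp : F p ∈ M := by
        rw [← key p hpM]
        exact chainReach_apply
      exact ⟨(hxmem p hpM (F p) hfp).trans (hxmem (F p) hfp p hpM),
        hxmem x₀ hx₀ p hpM, hxmem p hpM x₀ hx₀⟩
  refine ⟨_, ⟨x₀, hx₀x₀, rfl⟩, ?_, ?_⟩
  · rw [hDM]
    exact hMS.2.2.2
  · rw [hDM]
    exact hMS.2.1

/-- membership in iterated image of a homeomorphism. -/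
lemma mem_iterate_image_iff {X : Type*} [TopologicalSpace X] (f : X ≃ₜ X) (n : ℕ)
    (s : Set X) (x : X) : x ∈ (⇑f)^[n] '' s ↔ (⇑f.symm)^[n] x ∈ s := by
  induction n generalizing x with
  | zero => simp
  | succ n ih =>
    have h1 : (⇑f)^[n+1] '' s = ⇑f '' ((⇑f)^[n] '' s) := by
      rw [Function.iterate_succ']
      exact Set.image_comp _ _ _
    rw [h1, Function.iterate_succ_apply]
    constructor
    · rintro ⟨v, hv, rfl⟩
      rw [f.symm_apply_apply]
      exact (ih _).mp hv
    · intro h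
      exact ⟨f.symm x, (ih _).mpr h, f.apply_symm_apply x⟩

/-- Step 1: small-`δ` reach sets of a terminal chain component have closure inside
any given open neighborhood. -/
lemma exists_closure_reach_subset [MetricSpace X] [CompactSpace X] (f : X ≃ₜ X)
    {C O : Set X} {x₀ : X} (hx₀ : ChainReach (⇑f) x₀ x₀)
    (hCeq : C = {y | ChainReach (⇑f) y y ∧ ChainReach (⇑f) x₀ y ∧ ChainReach (⇑f) y x₀})
    (hter : ChainStable (⇑f) C) (hO : IsOpen O) (hCO : C ⊆ O) :
    ∃ δ > 0, closure (ReachSet (⇑f) C δ) ⊆ O := by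
  by_contra hcon
  push_neg at hcon
  set Z : ℕ → Set X := fun n => closure (ReachSet (⇑f) C (1 / (n + 1))) ∩ Oᶜ with hZdef
  have hZanti : Antitone Z := by
    intro n m hnm
    apply Set.inter_subset_inter_left
    apply closure_mono
    apply reachSet_mono
    apply one_div_le_one_div_of_le (by positivity)
    have : (n : ℝ) ≤ m := Nat.cast_le.mpr hnm
    linarith
  have hZne : ∀ n, (Z n).Nonempty := by
    intro n
    obtain ⟨w, hw1, hw2⟩ := Set.not_subset.mp (hcon (1 / (n + 1)) (by positivity))
    exact ⟨w, hw1, hw2⟩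
  have hZcl : ∀ n, IsClosed (Z n) := fun n => isClosed_closure.inter (hO.isClosed_compl)
  obtain ⟨y, hy⟩ := IsCompact.nonempty_iInter_of_directed_nonempty_isCompact_isClosed Z
    hZanti.directed_ge hZne (fun n => (hZcl n).isCompact) hZcl
  have hx₀C : x₀ ∈ C := by rw [hCeq]; exact ⟨hx₀, hx₀, hx₀⟩
  have hreach : ChainReach (⇑f) x₀ y := by
    intro δ hδ
    obtain ⟨n, hn⟩ := exists_nat_one_div_lt (show (0:ℝ) < δ / 4 by linarith)
    have hyZ := Set.mem_iInter.mp hy n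
    obtain ⟨y', hy', hdy⟩ := Metric.mem_closure_iff.mp hyZ.1 (δ / 2) (by linarith)
    obtain ⟨p, hp, k, hk, c, hc0, hck, hc⟩ := hy'
    have hc4 : IsDeltaChain (⇑f) (δ / 4) k c := hc.mono hn.le
    obtain ⟨e, he0, hek, he⟩ := chain_replace_last (y := y) (δ' := δ / 2) hk hc4
      (by rw [hck, dist_comm]; exact hdy.le)
    have hxp : ChainReach (⇑f) x₀ p := by
      rw [hCeq] at hp
      exact hp.2.1
    obtain ⟨k2, hk2, d, hd0, hdk, hd⟩ := hxp δ hδ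
    obtain ⟨g, hg0, hgk, hg⟩ := chain_concat hk2 hd (he.mono (by linarith))
      (by rw [hdk, he0, hc0])
    exact ⟨k2 + k, by omega, g, by rw [hg0, hd0], by rw [hgk, hek], hg⟩
  have hyC : y ∈ C := hter x₀ hx₀C y hreach
  exact (Set.mem_iInter.mp hy 0).2 (hCO hyC)

theorem stmt15 [MetricSpace X] [CompactSpace X] [ConnectedSpace X] (f : X ≃ₜ X)
    (C : Set X) (hC : IsChainComponent (⇑f) C) (hter : ChainStable (⇑f) C)
    (hne : C ≠ Set.univ)
    (b : ℝ) (hb : 0 < b) (hsh : ShadowsOn (⇑f) (Nbhd b C)) :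
    ∀ a > 0, ∃ D : Set X, IsChainComponent (⇑f) D ∧ ChainStable (⇑f) D ∧
      interior D = ∅ ∧ D ⊆ Nbhd a C := by
  intro a ha
  classical
  set F := ⇑f with hFdef
  have hcont : Continuous F := f.continuous
  obtain ⟨x₀, hx₀, hCeq⟩ := hC
  have hx₀C : x₀ ∈ C := by rw [hCeq]; exact ⟨hx₀, hx₀, hx₀⟩
  have hCne : C.Nonempty := ⟨x₀, hx₀C⟩
  have hCcl : IsClosed C := by
    have hCrw : C = {y | ChainReach F y y} ∩
        ({y | ChainReach F x₀ y} ∩ {y | ChainReach F y x₀}) := by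
      rw [hCeq]
      ext y
      simp [Set.mem_setOf_eq, and_assoc]
    rw [hCrw]
    exact (isClosed_chainReach_self hcont).inter
      ((isClosed_chainReach_to F x₀).inter (isClosed_chainReach_from hcont x₀))
  obtain ⟨z, hz⟩ : ∃ z, z ∉ C := by
    by_contra h
    push_neg at h
    exact hne (Set.eq_univ_of_forall h)
  have hdz : 0 < infDist z C := (hCcl.notMem_iff_infDist_pos hCne).mp hz
  set ρ := min (min a b) (infDist z C) / 2 with hρdef
  have hρpos : 0 < ρ := by positivity
  have hρa : ρ ≤ a := by
    have h1 : min (min a b) (infDist z C) ≤ a :=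
      le_trans (min_le_left _ _) (min_le_left _ _)
    rw [hρdef]; linarith
  have hρb : ρ ≤ b := by
    have h1 : min (min a b) (infDist z C) ≤ b :=
      le_trans (min_le_left _ _) (min_le_right _ _)
    rw [hρdef]; linarith
  have hρz : ρ < infDist z C := by
    have h1 : min (min a b) (infDist z C) ≤ infDist z C := min_le_right _ _
    rw [hρdef]; linarith
  set O := {w : X | infDist w C < ρ} with hOdef
  have hOopen : IsOpen O := isOpen_lt (continuous_infDist_pt C) continuous_const
  have hCO : C ⊆ O := by
    intro p hp
    have : infDist p C = 0 := Metric.infDist_zero_of_mem hp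
    show infDist p C < ρ
    rw [this]; exact hρpos
  obtain ⟨δ₁, hδ₁pos, hδ₁⟩ := exists_closure_reach_subset f hx₀ hCeq hter hOopen hCO
  set U' := ReachSet F C δ₁ with hU'def
  have hrec : ∀ p ∈ C, ChainReach F p p := by
    intro p hp
    rw [hCeq] at hp
    exact hp.1
  have hCU' : C ⊆ U' := subset_reachSet hrec hδ₁pos
  have hU'ne : U'.Nonempty := ⟨x₀, hCU' hx₀C⟩
  set T := F '' U' with hTdef
  have hTne : T.Nonempty := hU'ne.image F
  set V := {w : X | infDist w T < δ₁ / 2} with hVdef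
  have hVopen : IsOpen V := isOpen_lt (continuous_infDist_pt T) continuous_const
  have hclVU' : closure V ⊆ U' := by
    intro w hw
    have h1 : infDist w T ≤ δ₁ / 2 := by
      have hsub : closure V ⊆ {w : X | infDist w T ≤ δ₁ / 2} :=
        closure_minimal (fun u hu => show infDist u T ≤ δ₁ / 2 from le_of_lt hu)
          (isClosed_le (continuous_infDist_pt T) continuous_const)
      exact hsub hw
    have h2 : infDist w T < δ₁ := lt_of_le_of_lt h1 (by linarith)
    obtain ⟨t, htT, hdt⟩ := (Metric.infDist_lt_iff hTne).mp h2
    obtain ⟨u, huU, rfl⟩ := htT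
    exact reachSet_extend huU (by rw [dist_comm]; exact hdt.le)
  have hFclV : F '' closure V ⊆ V := by
    rintro _ ⟨v, hv, rfl⟩
    have hFv : F v ∈ T := Set.mem_image_of_mem F (hclVU' hv)
    show infDist (F v) T < δ₁ / 2
    rw [Metric.infDist_zero_of_mem hFv]
    linarith
  have hclVO : closure V ⊆ O := fun w hw => hδ₁ (subset_closure (hclVU' hw))
  set K : ℕ → Set X := fun n => F^[n] '' closure V with hKdef
  have hKc : ∀ n, IsCompact (K n) := fun n =>
    (isClosed_closure.isCompact).image (hcont.iterate n)
  have hKcl : ∀ n, IsClosed (K n) := fun n => (hKc n).isClosed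
  have hVne : V.Nonempty := by
    obtain ⟨t, ht⟩ := hTne
    refine ⟨t, ?_⟩
    show infDist t T < δ₁ / 2
    rw [Metric.infDist_zero_of_mem ht]
    linarith
  have hKne : ∀ n, (K n).Nonempty := fun n => (hVne.closure).image _
  have hK0 : K 0 = closure V := by simp [hKdef]
  have hKsucc' : ∀ n, F '' K n = K (n + 1) := by
    intro n
    show F '' (F^[n] '' closure V) = F^[n + 1] '' closure V
    rw [Function.iterate_succ', Set.image_comp]
  have hKsub : ∀ n, K (n + 1) ⊆ K n := by
    intro n
    show F^[n + 1] '' closure V ⊆ F^[n] '' closure V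
    rw [Function.iterate_succ, Set.image_comp]
    exact Set.image_mono (fun v hv => subset_closure (hFclV hv))
  have hKanti : Antitone K := antitone_nat_of_succ_le hKsub
  set A := ⋂ n, K n with hAdef
  have hAne : A.Nonempty :=
    IsCompact.nonempty_iInter_of_directed_nonempty_isCompact_isClosed K
      hKanti.directed_ge hKne hKc hKcl
  have hAcl : IsClosed A := isClosed_iInter hKcl
  have hAcomp : IsCompact A := hAcl.isCompact
  have hAK : ∀ n, A ⊆ K n := fun n => Set.iInter_subset K n
  have hAclV : A ⊆ closure V := by rw [← hK0]; exact hAK 0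
  have hFA : F '' A = A := by
    apply Set.Subset.antisymm
    · rintro _ ⟨v, hv, rfl⟩
      refine Set.mem_iInter.mpr fun n => ?_
      exact hKsub n (by rw [← hKsucc' n]; exact Set.mem_image_of_mem F (hAK n hv))
    · intro x hx
      refine ⟨f.symm x, ?_, f.apply_symm_apply x⟩
      refine Set.mem_iInter.mpr fun n => ?_
      have hx1 : x ∈ K (n + 1) := hAK (n + 1) hx
      rw [← hKsucc' n] at hx1
      obtain ⟨v, hv, hfv⟩ := hx1
      have hveq : f.symm x = v := by rw [← hfv]; exact f.symm_apply_apply v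
      rw [hveq]; exact hv
  have hFAiter : ∀ n, F^[n] '' A = A := by
    intro n
    induction n with
    | zero => simp
    | succ n ih => rw [Function.iterate_succ', Set.image_comp, ih, hFA]
  have hAV : A ⊆ V := by
    intro x hx
    have h1 := hAK 1 hx
    rw [← hKsucc' 0, hK0] at h1
    exact hFclV h1
  set W := F '' V with hWdef
  have hWopen : IsOpen W := f.isOpenMap V hVopen
  have hAW : A ⊆ W := by
    rw [← hFA]
    exact Set.image_mono hAV
  have hK1 : K 1 = F '' closure V := by rw [← hKsucc' 0, hK0]
  have hclWsub : closure W ⊆ F '' closure V :=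
    closure_minimal (Set.image_mono subset_closure) (by rw [← hK1]; exact hKcl 1)
  have hclWV : closure W ⊆ V := hclWsub.trans hFclV
  have hK1V : K 1 ⊆ V := by rw [hK1]; exact hFclV
  obtain ⟨η, hηpos, hηsub⟩ := (hKc 1).exists_cthickening_subset_open hVopen hK1V
  have hηlem : ∀ w v, v ∈ closure V → dist w (F v) ≤ η → w ∈ V := by
    intro w v hv hd
    apply hηsub
    exact Metric.mem_cthickening_of_dist_le w (F v) η (K 1)
      (by rw [hK1]; exact Set.mem_image_of_mem F hv) hd
  have hopenIter : ∀ n : ℕ, IsOpen (F^[n] '' V) := by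
    intro n
    induction n with
    | zero => simpa using hVopen
    | succ n ih =>
      rw [Function.iterate_succ', Set.image_comp]
      exact f.isOpenMap _ ih
  have hAstable : ∀ x ∈ A, ∀ y, ChainReach F x y → y ∈ A := by
    intro x hx y hy
    refine Set.mem_iInter.mpr fun n => ?_
    have hsubn : K (n + 1) ⊆ F^[n] '' V := by
      show F^[n + 1] '' closure V ⊆ F^[n] '' V
      rw [Function.iterate_succ, Set.image_comp]
      exact Set.image_mono hFclV
    obtain ⟨ηn, hηnpos, hηnsub⟩ :=
      (hKc (n + 1)).exists_cthickening_subset_open (hopenIter n) hsubn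
    obtain ⟨k, hk, c, hc0, hck, hc⟩ := hy ηn hηnpos
    have hstay := chain_stay (F := F) (T := K n) (G := F^[n] '' V)
      (fun w v hvT hd => hηnsub (Metric.mem_cthickening_of_dist_le w (F v) ηn (K (n + 1))
        (by rw [← hKsucc' n]; exact Set.mem_image_of_mem F hvT) hd))
      (Set.image_mono subset_closure) le_rfl hc (by rw [hc0]; exact hAK n hx) k hk le_rfl
    rw [hck] at hstay
    exact Set.image_mono subset_closure hstay
  obtain ⟨γ, hγpos, hγsub⟩ := hAcomp.exists_cthickening_subset_open hWopen hAW
  have hγlem : ∀ u w, w ∈ A → dist u w ≤ γ → u ∈ W :=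
    fun u w hw hd => hγsub (Metric.mem_cthickening_of_dist_le u w γ A hw hd)
  have hiInterW : (⋂ m, F^[m] '' closure W) ⊆ A := by
    intro u hu
    refine Set.mem_iInter.mpr fun n => ?_
    have h2 : K (n + 1) = F^[n] '' (F '' closure V) := by
      show F^[n + 1] '' closure V = _
      rw [Function.iterate_succ, Set.image_comp]
    have h3 : F^[n] '' (F '' closure V) ⊆ K n := by rw [← h2]; exact hKsub n
    exact ((Set.image_mono hclWsub).trans h3) (Set.mem_iInter.mp hu n)
  have hfrA : ChainStable F (frontier A) := by
    intro x hx y hy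
    have hxA : x ∈ A := hAcl.frontier_subset hx
    have hyA : y ∈ A := hAstable x hxA y hy
    rw [frontier_eq_closure_inter_closure]
    refine ⟨subset_closure hyA, ?_⟩
    rw [Metric.mem_closure_iff]
    intro ε hε
    set ε' := min (ε / 2) γ with hε'def
    have hε'pos : 0 < ε' := lt_min (by linarith) hγpos
    obtain ⟨δs, hδspos, hshad⟩ := hsh ε' hε'pos
    set δc := min δs η / 2 with hδcdef
    have hδcpos : 0 < δc := by positivity
    have hminpos : 0 < min δs η := lt_min hδspos hηpos
    have hδcδs : δc ≤ δs := by
      have h1 := min_le_left δs η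
      rw [hδcdef]; linarith
    have hδcη : δc ≤ η := by
      have h1 := min_le_right δs η
      rw [hδcdef]; linarith
    obtain ⟨k, hk, c, hc0, hck, hc⟩ := hy δc hδcpos
    have hxW : x ∈ W := hAW hxA
    obtain ⟨r₁, hr₁pos, hball⟩ := Metric.isOpen_iff.mp hWopen x hxW
    obtain ⟨r₂, hr₂pos, hcont2⟩ := Metric.continuous_iff.mp hcont x δc hδcpos
    have hxclA : x ∈ closure Aᶜ := by
      have hx2 := hx
      rw [frontier_eq_closure_inter_closure] at hx2
      exact hx2.2
    obtain ⟨x', hx'c, hdx'⟩ := Metric.mem_closure_iff.mp hxclA (min r₁ r₂) (by positivity)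
    have hx'W : x' ∈ W := hball (by
      rw [Metric.mem_ball, dist_comm]
      exact hdx'.trans_le (min_le_left _ _))
    have hx'A : x' ∉ A := hx'c
    have hexm : ∃ m, (⇑f.symm)^[m] x' ∉ closure W := by
      by_contra hcon
      push_neg at hcon
      exact hx'A (hiInterW (Set.mem_iInter.mpr fun m =>
        (mem_iterate_image_iff f m (closure W) x').mpr (hcon m)))
    set m := Nat.find hexm with hmdef
    have hmspec : (⇑f.symm)^[m] x' ∉ closure W := Nat.find_spec hexm
    have hmmin : ∀ j, j < m → (⇑f.symm)^[j] x' ∈ closure W := fun j hj =>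
      not_not.mp (Nat.find_min hexm hj)
    have hm1 : 1 ≤ m := by
      by_contra h
      apply hmspec
      have h0 : (⇑f.symm)^[0] x' ∈ closure W := by simpa using subset_closure hx'W
      rw [show m = 0 by omega]
      exact h0
    set e : ℕ → X := fun i => if i ≤ m then (⇑f.symm)^[m - i] x' else c (i - m) with hedef
    have hFsymm : ∀ s : ℕ, ∀ u : X, F ((⇑f.symm)^[s + 1] u) = (⇑f.symm)^[s] u := by
      intro s u
      rw [Function.iterate_succ_apply']
      exact f.apply_symm_apply _
    have hchain : IsDeltaChain F δs (m + k) e := by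
      intro i hi
      by_cases h1 : i < m
      · have h2 : i ≤ m := by omega
        have h3 : i + 1 ≤ m := by omega
        show dist (F (e i)) (e (i + 1)) ≤ δs
        simp only [hedef, if_pos h2, if_pos h3]
        rw [show m - i = (m - (i + 1)) + 1 by omega, hFsymm]
        simp [hδspos.le]
      · by_cases h5 : i = m
        · show dist (F (e i)) (e (i + 1)) ≤ δs
          have hei : e i = x' := by
            show (if i ≤ m then (⇑f.symm)^[m - i] x' else c (i - m)) = x'
            rw [if_pos (le_of_eq h5), h5, Nat.sub_self, Function.iterate_zero_apply]
          have hei1 : e (i + 1) = c 1 := by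
            show (if i + 1 ≤ m then (⇑f.symm)^[m - (i + 1)] x' else c (i + 1 - m)) = c 1
            rw [if_neg (by omega), show i + 1 - m = 1 by omega]
          rw [hei, hei1]
          have hd1 : dist (F x') (F x) < δc := by
            rw [dist_comm x x'] at hdx'
            exact hcont2 x' (hdx'.trans_le (min_le_right _ _))
          have hd2 : dist (F x) (c 1) ≤ δc := by
            have h6 := hc 0 (by omega)
            rwa [hc0] at h6
          calc dist (F x') (c 1) ≤ dist (F x') (F x) + dist (F x) (c 1) :=
                dist_triangle _ _ _
            _ ≤ δc + δc := add_le_add hd1.le hd2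
            _ = min δs η := by rw [hδcdef]; ring
            _ ≤ δs := min_le_left _ _
        · have h6 : ¬ (i ≤ m) := by omega
          have h7 : ¬ (i + 1 ≤ m) := by omega
          show dist (F (e i)) (e (i + 1)) ≤ δs
          simp only [hedef, if_neg h6, if_neg h7]
          rw [show i + 1 - m = (i - m) + 1 by omega]
          exact (hc (i - m) (by omega)).trans hδcδs
    have hstayc : ∀ j, 1 ≤ j → j ≤ k → c j ∈ V :=
      chain_stay hηlem (fun v hv => subset_closure hv) hδcη hc
        (by rw [hc0]; exact hAclV hxA)
    have hmemV : ∀ i, i ≤ m + k → e i ∈ closure V := by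
      intro i hi
      by_cases h0 : i = 0
      · subst h0
        show (if 0 ≤ m then (⇑f.symm)^[m - 0] x' else c (0 - m)) ∈ closure V
        rw [if_pos (Nat.zero_le m), Nat.sub_zero,
          show m = (m - 1) + 1 by omega, Function.iterate_succ_apply']
        have h1 : (⇑f.symm)^[m - 1] x' ∈ closure W := hmmin (m - 1) (by omega)
        obtain ⟨v, hv, hfv⟩ := hclWsub h1
        rw [← hfv]
        rw [show f.symm (F v) = v from f.symm_apply_apply v]
        exact hv
      · by_cases h2 : i ≤ m
        · show (if i ≤ m then (⇑f.symm)^[m - i] x' else c (i - m)) ∈ closure V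
          rw [if_pos h2]
          exact subset_closure (hclWV (hmmin (m - i) (by omega)))
        · show (if i ≤ m then (⇑f.symm)^[m - i] x' else c (i - m)) ∈ closure V
          rw [if_neg h2]
          exact subset_closure (hstayc (i - m) (by omega) (by omega))
    have hclVNb : closure V ⊆ Nbhd b C := by
      intro w hw
      have h1 : infDist w C < ρ := hclVO hw
      show infDist w C ≤ b
      linarith
    have hmemNb : ∀ i, i ≤ m + k → e i ∈ Nbhd b C := fun i hi => hclVNb (hmemV i hi)
    obtain ⟨w, hw⟩ := hshad (m + k) e hmemNb hchain
    have hw0 : dist (e 0) w ≤ ε' := by simpa using hw 0 (Nat.zero_le _)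
    have hwA : w ∉ A := by
      intro hwA
      apply hmspec
      have he0 : e 0 = (⇑f.symm)^[m] x' := by simp [hedef]
      have h1 : e 0 ∈ W := hγlem (e 0) w hwA (hw0.trans (min_le_right _ _))
      rw [he0] at h1
      exact subset_closure h1
    refine ⟨F^[m + k] w, ?_, ?_⟩
    · simp only [Set.mem_compl_iff]
      intro hmem
      apply hwA
      rw [← hFAiter (m + k)] at hmem
      obtain ⟨v, hv, hfv⟩ := hmem
      have h1 : v = w := f.injective.iterate (m + k) hfv
      rwa [← h1]
    · have hwk := hw (m + k) le_rfl
      have hek : e (m + k) = y := by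
        show (if m + k ≤ m then (⇑f.symm)^[m - (m + k)] x' else c (m + k - m)) = y
        rw [if_neg (by omega : ¬ (m + k ≤ m)), show m + k - m = k by omega, hck]
      rw [hek] at hwk
      calc dist y (F^[m + k] w) ≤ ε' := hwk
        _ ≤ ε / 2 := min_le_left _ _
        _ < ε := by linarith
  have hfrne : (frontier A).Nonempty := by
    by_contra h
    rw [Set.not_nonempty_iff_eq_empty] at h
    have hclopen : IsClopen A := by
      refine ⟨hAcl, ?_⟩
      have hfr := hAcl.frontier_eq
      rw [h] at hfr
      have h2 : A \ interior A = ∅ := hfr.symm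
      have h3 : A ⊆ interior A := by rwa [Set.diff_eq_empty] at h2
      have h4 : interior A = A := Set.Subset.antisymm interior_subset h3
      rw [← h4]
      exact isOpen_interior
    rcases isClopen_iff.mp hclopen with h0 | h1
    · exact hAne.ne_empty h0
    · have hzA : z ∈ A := by rw [h1]; trivial
      have h2 : infDist z C < ρ := hclVO (hAclV hzA)
      linarith
  obtain ⟨D, hDcomp, hDstable, hDsub⟩ :=
    exists_terminal_subset hfrne isClosed_frontier hfrA
  refine ⟨D, hDcomp, hDstable, ?_, ?_⟩
  · have h1 : interior D ⊆ interior (frontier A) := interior_mono hDsub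
    rw [interior_frontier hAcl] at h1
    exact Set.subset_empty_iff.mp h1
  · intro d hd
    have h1 : infDist d C < ρ := hclVO (hAclV (hAcl.frontier_subset (hDsub hd)))
    show infDist d C ≤ a
    linarith
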